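/- Let H be a finite simple graph. If there exist an odd n ≥ 3 and a graph homomorphism f : C_n → H with σ₂(f) = 0 in 𝒢₂(H), then for every m ≥ 0 there is no Z₂-map from S^m(𝓗(H)) to Q₁. -/

import Mathlib

/-- The type of arcs of a simple graph: ordered pairs of adjacent vertices. -/
abbrev Arc {V : Type} (H : SimpleGraph V) : Type := {p : V × V // H.Adj p.1 p.2}

/-- The relators `(a,b)(c,b)⁻¹(c,d)(a,d)⁻¹` over all 4-cycles `(a,b,c,d)` of `H`. -/
def relators1 {V : Type} (H : SimpleGraph V) : Set (FreeGroup (Arc H)) :=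
  {r | ∃ (a b c d : V) (hab : H.Adj a b) (hcb : H.Adj c b) (hcd : H.Adj c d) (had : H.Adj a d),
    r = FreeGroup.of ⟨(a, b), hab⟩ * (FreeGroup.of ⟨(c, b), hcb⟩)⁻¹ *
        FreeGroup.of ⟨(c, d), hcd⟩ * (FreeGroup.of ⟨(a, d), had⟩)⁻¹}

/-- The group `𝒢₁(H)`, presented by the arcs with the 4-cycle relators. -/
abbrev G1 {V : Type} (H : SimpleGraph V) := PresentedGroup (relators1 H)

/-- `f : ZMod n → V` is a homomorphism from the cycle `C_n` to `H`. -/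
def IsCycleHom {V : Type} (H : SimpleGraph V) (n : ℕ) (f : ZMod n → V) : Prop :=
  ∀ i : ZMod n, H.Adj (f i) (f (i + 1))

/-- The signature `σ₁(f) = ∏_{i=0}^{n-1} (f(2i),f(2i+1))·(f(2i+2),f(2i+1))⁻¹ ∈ 𝒢₁(H)`,
the product being taken from left to right. -/
def sig1 {V : Type} (H : SimpleGraph V) (n : ℕ) (f : ZMod n → V) (hf : IsCycleHom H n f) :
    G1 H :=
  ((List.range n).map (fun k =>
    PresentedGroup.of (rels := relators1 H)
        ⟨(f (2 * (k : ZMod n)), f (2 * (k : ZMod n) + 1)), hf _⟩ *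
    (PresentedGroup.of (rels := relators1 H)
        ⟨(f (2 * (k : ZMod n) + 1 + 1), f (2 * (k : ZMod n) + 1)), (hf _).symm⟩)⁻¹)).prod

/-- The cycle graph on `ZMod n` (`i` adjacent to `i ± 1`). -/
def cyc (n : ℕ) : SimpleGraph (ZMod n) := SimpleGraph.fromRel (fun i j => j = i + 1)

/-- Adjacency for the generalized Mycielskian. -/
def mycAdj {W : Type} (G : SimpleGraph W) (q : ℕ) :
    (W × Fin q) ⊕ Unit → (W × Fin q) ⊕ Unit → Prop
  | Sum.inl (u, i), Sum.inl (v, j) =>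
      G.Adj u v ∧ ((i : ℕ) + 1 = (j : ℕ) ∨ (j : ℕ) + 1 = (i : ℕ) ∨ ((i : ℕ) = 0 ∧ (j : ℕ) = 0))
  | Sum.inl (u, i), Sum.inr _ => (i : ℕ) = q - 1 ∧ ∃ v, G.Adj u v
  | Sum.inr _, Sum.inl (u, i) => (i : ℕ) = q - 1 ∧ ∃ v, G.Adj u v
  | Sum.inr _, Sum.inr _ => False

/-- The generalized Mycielskian `M_q(G)`: levels `0,…,q-1` of `G` plus an apex `*`. -/
def Myc {W : Type} (G : SimpleGraph W) (q : ℕ) : SimpleGraph ((W × Fin q) ⊕ Unit) where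
  Adj := mycAdj G q
  symm := ⟨by
    rintro (⟨u, i⟩ | ⟨⟩) (⟨v, j⟩ | ⟨⟩) h <;> simp only [mycAdj] at h ⊢
    · exact ⟨h.1.symm, by tauto⟩
    · exact h
    · exact h⟩
  loopless := ⟨by
    rintro (⟨u, i⟩ | ⟨⟩) h <;> simp only [mycAdj] at h
    exact G.loopless.irrefl u h.1⟩
/-- The free `ZMod 2`-vector space on the arcs of `H`. -/
abbrev ArcSpace {V : Type} (H : SimpleGraph V) := Arc H →₀ ZMod 2

/-- The relator vectors `(a,b)+(c,b)+(c,d)+(a,d)` over all 4-cycles `(a,b,c,d)` of `H`. -/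
def relators2 {V : Type} (H : SimpleGraph V) : Set (ArcSpace H) :=
  {r | ∃ (a b c d : V) (hab : H.Adj a b) (hcb : H.Adj c b) (hcd : H.Adj c d) (had : H.Adj a d),
    r = Finsupp.single ⟨(a, b), hab⟩ 1 + Finsupp.single ⟨(c, b), hcb⟩ 1 +
        Finsupp.single ⟨(c, d), hcd⟩ 1 + Finsupp.single ⟨(a, d), had⟩ 1}

/-- `𝒢₂(H)`: the quotient of the free `ZMod 2`-vector space on `A(H)` by the span of the
4-cycle relators. -/
abbrev G2 {V : Type} (H : SimpleGraph V) :=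
  ArcSpace H ⧸ Submodule.span (ZMod 2) (relators2 H)

/-- The class of the basis vector corresponding to an arc, in `𝒢₂(H)`. -/
noncomputable def arcClass {V : Type} (H : SimpleGraph V) (a : Arc H) : G2 H :=
  Submodule.Quotient.mk (Finsupp.single a 1)

/-- The signature `σ₂(f) = Σ_{i=0}^{n-1} [(f(2i),f(2i+1)) + (f(2i+2),f(2i+1))] ∈ 𝒢₂(H)`. -/
noncomputable def sig2 {V : Type} (H : SimpleGraph V) (n : ℕ) (f : ZMod n → V) (hf : IsCycleHom H n f) :
    G2 H :=
  ∑ k ∈ Finset.range n,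
    (arcClass H ⟨(f (2 * (k : ZMod n)), f (2 * (k : ZMod n) + 1)), hf _⟩ +
     arcClass H ⟨(f (2 * (k : ZMod n) + 1 + 1), f (2 * (k : ZMod n) + 1)), (hf _).symm⟩)
/-! ### The poset `Q₁` (face poset of the 1-dimensional cross-polytope) -/

/-- The four elements `+0, -0, +1, -1` of `Q₁`. -/
inductive Q1 : Type
  | p0 | m0 | p1 | m1
deriving DecidableEq

instance instFintypeQ1 : Fintype Q1 :=
  ⟨{.p0, .m0, .p1, .m1}, fun x => by cases x <;> decide⟩

/-- The level (`false` for `±0`, `true` for `±1`) of an element of `Q₁`. -/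
def Q1.lvl : Q1 → Bool
  | .p0 => false | .m0 => false | .p1 => true | .m1 => true

/-- The order on `Q₁`: `±0 < ±1` (all four strict relations). -/
instance : PartialOrder Q1 where
  le x y := x = y ∨ (x.lvl = false ∧ y.lvl = true)
  le_refl x := Or.inl rfl
  le_trans x y z hxy hyz := by
    rcases hxy with rfl | ⟨h1, h2⟩
    · exact hyz
    rcases hyz with rfl | ⟨h3, h4⟩
    · exact Or.inr ⟨h1, h2⟩
    · rw [h2] at h3; exact absurd h3 (by simp)
  le_antisymm x y hxy hyx := by
    rcases hxy with rfl | ⟨h1, h2⟩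
    · rfl
    rcases hyx with rfl | ⟨h3, h4⟩
    · rfl
    · rw [h2] at h3; exact absurd h3 (by simp)

/-- The involution of `Q₁`, swapping `+x` and `-x`. -/
def q1inv : Q1 → Q1
  | .p0 => .m0 | .m0 => .p0 | .p1 => .m1 | .m1 => .p1


/-- The barycentric subdivision of a poset: nonempty chains, ordered by inclusion. -/
def Sd (α : Type) [PartialOrder α] : Type :=
  {C : Set α // C.Nonempty ∧ IsChain (· ≤ ·) C}

instance {α : Type} [PartialOrder α] : PartialOrder (Sd α) :=
  inferInstanceAs (PartialOrder {C : Set α // C.Nonempty ∧ IsChain (· ≤ ·) C})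

instance {α : Type} [PartialOrder α] [Finite α] : Finite (Sd α) :=
  inferInstanceAs (Finite {C : Set α // C.Nonempty ∧ IsChain (· ≤ ·) C})

/-- A bundled finite `Z₂`-poset: a finite poset with a fixed-point free order-involution. -/
structure Z2Poset where
  carrier : Type
  [po : PartialOrder carrier]
  [fin : Finite carrier]
  inv : carrier → carrier
  mono : Monotone inv
  invol : ∀ x, inv (inv x) = x
  nfix : ∀ x, inv x ≠ x

attribute [instance] Z2Poset.po Z2Poset.fin

/-- The barycentric subdivision of a `Z₂`-poset, with involution `C ↦ ν(C)`. -/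
def Z2Poset.sd (P : Z2Poset) : Z2Poset where
  carrier := Sd P.carrier
  po := inferInstance
  fin := inferInstance
  inv := fun C => ⟨P.inv '' C.val, C.prop.1.image _,
    C.prop.2.image_of_map_rel (· ≤ ·) (· ≤ ·) P.inv (fun _ _ h => P.mono h)⟩
  mono := fun C D h => Set.image_mono h
  invol := fun C => Subtype.ext (by
    show P.inv '' (P.inv '' C.val) = C.val
    rw [Set.image_image]; simp [P.invol])
  nfix := fun C h => by
    have hval : P.inv '' C.val = C.val := congrArg Subtype.val h
    obtain ⟨m, hm, hmax'⟩ :=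
      Set.Finite.exists_maximalFor id C.val (Set.toFinite _) C.prop.1
    have hmax : ∀ a ∈ C.val, m ≤ a → m = a := fun a ha hle => le_antisymm hle (hmax' ha hle)
    have hmem : P.inv m ∈ C.val := by rw [← hval]; exact ⟨m, hm, rfl⟩
    have hne : m ≠ P.inv m := fun e => P.nfix m e.symm
    rcases C.prop.2 hm hmem hne with hle | hle
    · exact P.nfix m (hmax _ hmem hle).symm
    · have h2 : m ≤ P.inv m := by
        have h3 := P.mono hle
        rwa [P.invol] at h3
      exact P.nfix m (hmax _ hmem h2).symm
/-- The hom-poset `𝓗(H)`: pairs `(A,B)` of nonempty sets of vertices with every vertex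
of `A` adjacent to every vertex of `B`, ordered by coordinatewise inclusion. -/
def HomPt {V : Type} (H : SimpleGraph V) : Type :=
  {AB : Set V × Set V // AB.1.Nonempty ∧ AB.2.Nonempty ∧ ∀ a ∈ AB.1, ∀ b ∈ AB.2, H.Adj a b}

instance {V : Type} (H : SimpleGraph V) : PartialOrder (HomPt H) :=
  inferInstanceAs (PartialOrder
    {AB : Set V × Set V // AB.1.Nonempty ∧ AB.2.Nonempty ∧ ∀ a ∈ AB.1, ∀ b ∈ AB.2, H.Adj a b})

instance {V : Type} [Finite V] (H : SimpleGraph V) : Finite (HomPt H) :=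
  inferInstanceAs (Finite
    {AB : Set V × Set V // AB.1.Nonempty ∧ AB.2.Nonempty ∧ ∀ a ∈ AB.1, ∀ b ∈ AB.2, H.Adj a b})

/-- The eight-element subposet `ρ⁺` of `𝓗(H)` associated to a 4-cycle `(a,b,c,d)`. -/
def rhoP {V : Type} (H : SimpleGraph V) (a b c d : V) : Set (HomPt H) :=
  {X | X.val = ({a}, H.neighborSet a) ∨ X.val = (H.neighborSet b, {b}) ∨
       X.val = ({c}, H.neighborSet c) ∨ X.val = (H.neighborSet d, {d}) ∨
       X.val = ({a}, {b}) ∨ X.val = ({c}, {b}) ∨ X.val = ({c}, {d}) ∨ X.val = ({a}, {d})}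

/-- The thirteen-element subposet `D(ρ⁺)` of `𝓗(H)`, obtained from `ρ⁺` by adding five
further elements. -/
def DrhoP {V : Type} (H : SimpleGraph V) (a b c d : V) : Set (HomPt H) :=
  rhoP H a b c d ∪
    {X | X.val = ({a}, {b, d}) ∨ X.val = ({a, c}, {b}) ∨ X.val = ({c}, {b, d}) ∨
         X.val = ({a, c}, {d}) ∨ X.val = (({a, c} : Set V), ({b, d} : Set V))}

/-- The involution `ν(A,B) = (B,A)` of the hom-poset. -/
def nuH {V : Type} (H : SimpleGraph V) (X : HomPt H) : HomPt H :=
  ⟨(X.val.2, X.val.1), X.prop.2.1, X.prop.1, fun b hb a ha => (X.prop.2.2 a ha b hb).symm⟩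

/-- The hom-complex `𝓗(H)` of a finite simple graph, as a `Z₂`-poset. -/
def homZ2 {V : Type} [Fintype V] (H : SimpleGraph V) : Z2Poset where
  carrier := HomPt H
  po := inferInstance
  fin := inferInstance
  inv := nuH H
  mono := fun X Y h => ⟨h.2, h.1⟩
  invol := fun X => rfl
  nfix := fun X h => by
    have h1 : X.val.2 = X.val.1 := congrArg (fun Y : HomPt H => Y.val.1) h
    obtain ⟨x, hx⟩ := X.prop.1
    exact H.loopless.irrefl x (X.prop.2.2 x hx x (by rw [h1]; exact hx))

/-! ### Auxiliary development for the proof -/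

section AuxQ1

/-- Decidability of the order on `Q₁`. -/
instance : DecidableRel ((· ≤ ·) : Q1 → Q1 → Prop) :=
  fun x y => decidable_of_iff (x = y ∨ (x.lvl = false ∧ y.lvl = true)) Iff.rfl

/-- The "side" function on `Q₁`. -/
def hqQ : Q1 → ZMod 2
  | .p0 => 0 | .p1 => 1 | .m0 => 1 | .m1 => 0

/-- The "sign" function on `Q₁`. -/
def sqQ : Q1 → ZMod 2
  | .p0 => 0 | .p1 => 0 | .m0 => 1 | .m1 => 1

/-- A `Z₂`-cocycle on `Q₁`. -/
def chiQ (q r : Q1) : ZMod 2 := sqQ q * (hqQ q + hqQ r)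

lemma chiQ_cocy : ∀ q r t : Q1, q ≤ r → r ≤ t → chiQ q t = chiQ q r + chiQ r t := by decide

lemma chiQ_defect : ∀ q r : Q1, chiQ q r + chiQ (q1inv q) (q1inv r) = hqQ q + hqQ r := by decide

lemma hqQ_inv : ∀ q : Q1, hqQ (q1inv q) = hqQ q + 1 := by decide

lemma z2_rearr : ∀ p q r : ZMod 2, p = q + r → q = p + r := by decide

lemma z2_move : ∀ a b c d : ZMod 2, a + b = c + d → a = b + c + d := by decide

end AuxQ1

section AuxCocyc

/-- An equivariant cocycle bundle on a `Z₂`-poset. -/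
structure Cocyc (R : Z2Poset) where
  c : R.carrier → R.carrier → ZMod 2
  eta : R.carrier → ZMod 2
  cocy : ∀ x y z : R.carrier, x ≤ y → y ≤ z → c x z = c x y + c y z
  defect : ∀ x y : R.carrier, c x y + c (R.inv x) (R.inv y) = eta x + eta y
  etainv : ∀ x : R.carrier, eta (R.inv x) = eta x + 1

variable {R : Z2Poset}

/-- Singleton chain in the subdivision. -/
def singSd (x : R.carrier) : (R.sd).carrier :=
  ⟨{x}, ⟨x, rfl⟩, by
    intro a ha b hb hne
    rw [Set.mem_singleton_iff] at ha hb; subst ha; subst hb; exact absurd rfl hne⟩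

lemma singSd_val (x : R.carrier) : (singSd x).val = ({x} : Set R.carrier) := rfl

open Classical in
/-- Pair chain in the subdivision (junk value if incomparable). -/
noncomputable def pcSd (x y : R.carrier) : (R.sd).carrier :=
  if h : x ≤ y then
    ⟨{x, y}, ⟨x, Or.inl rfl⟩, by
      intro a ha b hb hne
      rcases ha with rfl | ha
      · rcases hb with rfl | hb
        · exact absurd rfl hne
        · rw [Set.mem_singleton_iff] at hb; subst hb; exact Or.inl h
      · rw [Set.mem_singleton_iff] at ha; subst ha
        rcases hb with rfl | hb
        · exact Or.inr h
        · rw [Set.mem_singleton_iff] at hb; subst hb; exact absurd rfl hne⟩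
  else singSd x

lemma sd_le_iff {C D : (R.sd).carrier} : C ≤ D ↔ C.val ⊆ D.val := Iff.rfl

lemma pcSd_val {x y : R.carrier} (h : x ≤ y) : (pcSd x y).val = {x, y} := by
  unfold pcSd
  generalize Classical.propDecidable (x ≤ y) = inst
  cases inst with
  | isFalse hn => exact absurd h hn
  | isTrue _ => rfl

lemma sing_le_pc_left {x y : R.carrier} (h : x ≤ y) : singSd x ≤ pcSd x y := by
  rw [sd_le_iff, pcSd_val h, singSd_val]
  intro a ha; rw [Set.mem_singleton_iff] at ha; subst ha; exact Or.inl rfl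

lemma sing_le_pc_right {x y : R.carrier} (h : x ≤ y) : singSd y ≤ pcSd x y := by
  rw [sd_le_iff, pcSd_val h, singSd_val]
  intro a ha; rw [Set.mem_singleton_iff] at ha; subst ha; exact Or.inr rfl

lemma sdinv_sing (x : R.carrier) : (R.sd).inv (singSd x) = singSd (R.inv x) :=
  Subtype.ext (by show R.inv '' {x} = {R.inv x}; rw [Set.image_singleton])

lemma sdinv_pc (x y : R.carrier) : (R.sd).inv (pcSd x y) = pcSd (R.inv x) (R.inv y) := by
  by_cases h : x ≤ y
  · have h' : R.inv x ≤ R.inv y := R.mono h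
    apply Subtype.ext
    show R.inv '' (pcSd x y).val = (pcSd (R.inv x) (R.inv y)).val
    rw [pcSd_val h, pcSd_val h', Set.image_insert_eq, Set.image_singleton]
  · have h' : ¬ R.inv x ≤ R.inv y := fun hh => h (by
      have := R.mono hh; rwa [R.invol, R.invol] at this)
    apply Subtype.ext
    show R.inv '' (pcSd x y).val = (pcSd (R.inv x) (R.inv y)).val
    unfold pcSd
    generalize Classical.propDecidable (x ≤ y) = inst
    generalize Classical.propDecidable (R.inv x ≤ R.inv y) = inst'
    cases inst with
    | isTrue hy => exact absurd hy h
    | isFalse _ =>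
    cases inst' with
    | isTrue hy => exact absurd hy h'
    | isFalse _ =>
    show R.inv '' {x} = {R.inv x}
    rw [Set.image_singleton]

/-- The pullback of a cocycle bundle along barycentric subdivision. -/
noncomputable def pbC (R : Z2Poset) (D : Cocyc R.sd) : Cocyc R where
  c x y := D.c (singSd x) (pcSd x y) + D.c (singSd y) (pcSd x y)
  eta x := D.eta (singSd x)
  cocy := by
    intro x y z hxy hyz
    have hxz : x ≤ z := hxy.trans hyz
    -- the triple chain
    have hch : IsChain (· ≤ ·) ({x, y, z} : Set R.carrier) := by
      intro a ha b hb hne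
      simp only [Set.mem_insert_iff, Set.mem_singleton_iff] at ha hb
      rcases ha with rfl | rfl | rfl <;> rcases hb with rfl | rfl | rfl <;>
        first
          | exact absurd rfl hne
          | exact Or.inl hxy | exact Or.inr hxy
          | exact Or.inl hyz | exact Or.inr hyz
          | exact Or.inl hxz | exact Or.inr hxz
    set w : (R.sd).carrier := ⟨({x, y, z} : Set R.carrier), ⟨x, Or.inl rfl⟩, hch⟩ with hw
    have hwval : w.val = ({x, y, z} : Set R.carrier) := rfl
    have lxw : singSd x ≤ w := by
      rw [sd_le_iff, hwval, singSd_val]; intro a ha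
      rw [Set.mem_singleton_iff] at ha; subst ha
      exact Or.inl rfl
    have lyw : singSd y ≤ w := by
      rw [sd_le_iff, hwval, singSd_val]; intro a ha
      rw [Set.mem_singleton_iff] at ha; subst ha
      exact Or.inr (Or.inl rfl)
    have lzw : singSd z ≤ w := by
      rw [sd_le_iff, hwval, singSd_val]; intro a ha
      rw [Set.mem_singleton_iff] at ha; subst ha
      exact Or.inr (Or.inr rfl)
    have lxyw : pcSd x y ≤ w := by
      rw [sd_le_iff, hwval, pcSd_val hxy]; intro a ha
      rcases ha with rfl | ha
      · exact Or.inl rfl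
      · rw [Set.mem_singleton_iff] at ha; subst ha; exact Or.inr (Or.inl rfl)
    have lyzw : pcSd y z ≤ w := by
      rw [sd_le_iff, hwval, pcSd_val hyz]; intro a ha
      rcases ha with rfl | ha
      · exact Or.inr (Or.inl rfl)
      · rw [Set.mem_singleton_iff] at ha; subst ha; exact Or.inr (Or.inr rfl)
    have lxzw : pcSd x z ≤ w := by
      rw [sd_le_iff, hwval, pcSd_val hxz]; intro a ha
      rcases ha with rfl | ha
      · exact Or.inl rfl
      · rw [Set.mem_singleton_iff] at ha; subst ha; exact Or.inr (Or.inr rfl)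
    rw [z2_rearr _ _ _ (D.cocy (singSd x) (pcSd x z) w (sing_le_pc_left hxz) lxzw),
        z2_rearr _ _ _ (D.cocy (singSd z) (pcSd x z) w (sing_le_pc_right hxz) lxzw),
        z2_rearr _ _ _ (D.cocy (singSd x) (pcSd x y) w (sing_le_pc_left hxy) lxyw),
        z2_rearr _ _ _ (D.cocy (singSd y) (pcSd x y) w (sing_le_pc_right hxy) lxyw),
        z2_rearr _ _ _ (D.cocy (singSd y) (pcSd y z) w (sing_le_pc_left hyz) lyzw),
        z2_rearr _ _ _ (D.cocy (singSd z) (pcSd y z) w (sing_le_pc_right hyz) lyzw)]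
    generalize D.c (singSd x) w = X
    generalize D.c (singSd y) w = Y
    generalize D.c (singSd z) w = Z
    generalize D.c (pcSd x y) w = P
    generalize D.c (pcSd y z) w = Q
    generalize D.c (pcSd x z) w = S
    revert X Y Z P Q S; decide
  defect := by
    intro x y
    have d1 := D.defect (singSd x) (pcSd x y)
    have d2 := D.defect (singSd y) (pcSd x y)
    rw [sdinv_sing, sdinv_pc] at d1 d2
    generalize D.c (singSd x) (pcSd x y) = A at d1 ⊢
    generalize D.c (singSd (R.inv x)) (pcSd (R.inv x) (R.inv y)) = B at d1 ⊢
    generalize D.c (singSd y) (pcSd x y) = A2 at d2 ⊢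
    generalize D.c (singSd (R.inv y)) (pcSd (R.inv x) (R.inv y)) = B2 at d2 ⊢
    generalize D.eta (singSd x) = p at d1 ⊢
    generalize D.eta (singSd y) = q at d2 ⊢
    generalize D.eta (pcSd x y) = r at d1 d2 ⊢
    revert d1 d2
    revert A B A2 B2 p q r
    decide
  etainv := by
    intro x
    show D.eta (singSd (R.inv x)) = D.eta (singSd x) + 1
    rw [← sdinv_sing, D.etainv]

/-- The base cocycle bundle obtained from a `Z₂`-map to `Q₁`. -/
def baseC (R : Z2Poset) (g : R.carrier → Q1) (h1 : Monotone g)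
    (h2 : ∀ x, g (R.inv x) = q1inv (g x)) : Cocyc R where
  c x y := chiQ (g x) (g y)
  eta x := hqQ (g x)
  cocy := fun x y z hxy hyz => chiQ_cocy _ _ _ (h1 hxy) (h1 hyz)
  defect := fun x y => by rw [h2, h2]; exact chiQ_defect _ _
  etainv := fun x => by rw [h2]; exact hqQ_inv _

/-- Iterated pullback: a `Z₂`-map `S^m(R) → Q₁` yields a cocycle bundle on `R`. -/
noncomputable def bundleC : (m : ℕ) → (R : Z2Poset) →
    (g : (Z2Poset.sd^[m] R).carrier → Q1) → Monotone g →
    (∀ x, g ((Z2Poset.sd^[m] R).inv x) = q1inv (g x)) → Cocyc R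
  | 0, R, g, h1, h2 => baseC R g h1 h2
  | (m + 1), R, g, h1, h2 => pbC R (bundleC m R.sd g h1 h2)

end AuxCocyc

section AuxHom

variable {V : Type} [Fintype V] (H : SimpleGraph V)

/-- The element `({u}, N(u))` of the hom-poset. -/
def AfnH (u : V) (h : ∃ w, H.Adj u w) : HomPt H :=
  ⟨({u}, H.neighborSet u), ⟨u, rfl⟩, h, by
    intro a ha b hb
    rw [Set.mem_singleton_iff] at ha; subst ha; exact hb⟩

/-- The element `(N(v), {v})` of the hom-poset. -/
def BfnH (v : V) (h : ∃ w, H.Adj v w) : HomPt H :=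
  ⟨(H.neighborSet v, {v}), h, ⟨v, rfl⟩, by
    intro a ha b hb
    rw [Set.mem_singleton_iff] at hb
    rw [hb]
    exact ((H.mem_neighborSet v a).mp ha).symm⟩

/-- The element `({u}, {v})` of the hom-poset. -/
def EvH (u v : V) (h : H.Adj u v) : HomPt H :=
  ⟨({u}, {v}), ⟨u, rfl⟩, ⟨v, rfl⟩, by
    intro a ha b hb
    rw [Set.mem_singleton_iff] at ha hb; subst ha; subst hb; exact h⟩

lemma homPt_le_iff {X Y : HomPt H} : X ≤ Y ↔ X.val.1 ⊆ Y.val.1 ∧ X.val.2 ⊆ Y.val.2 :=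
  Prod.le_def

/-- The quantity `φ(u,v)` attached to an arc, given a cocycle bundle on `𝓗(H)`. -/
noncomputable def phiD (D : Cocyc (homZ2 H)) : Arc H → ZMod 2 :=
  fun a =>
    D.c (EvH H a.1.1 a.1.2 a.2) (AfnH H a.1.1 ⟨a.1.2, a.2⟩) +
    D.c (EvH H a.1.1 a.1.2 a.2) (BfnH H a.1.2 ⟨a.1.1, a.2.symm⟩)

lemma phiD_eval (D : Cocyc (homZ2 H)) (u v : V) (huv : H.Adj u v)
    (h1 : ∃ w, H.Adj u w) (h2 : ∃ w, H.Adj v w) :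
    phiD H D ⟨(u, v), huv⟩ =
      D.c (EvH H u v huv) (AfnH H u h1) + D.c (EvH H u v huv) (BfnH H v h2) := rfl


/-- The `β`-function of an odd cycle. -/
noncomputable def betaD (D : Cocyc (homZ2 H)) {n : ℕ} (f : ZMod n → V) (hf : IsCycleHom H n f)
    (i : ZMod n) : ZMod 2 :=
  D.c (EvH H (f i) (f (i + 1)) (hf i)) (AfnH H (f i) ⟨f (i + 1), hf i⟩) +
  D.c (EvH H (f (i + 1)) (f i) (hf i).symm) (AfnH H (f (i + 1)) ⟨f i, (hf i).symm⟩) +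
  D.eta (EvH H (f i) (f (i + 1)) (hf i))

lemma phiD_pair (D : Cocyc (homZ2 H)) {n : ℕ} (f : ZMod n → V) (hf : IsCycleHom H n f)
    (i : ZMod n) :
    phiD H D ⟨(f i, f (i + 1)), hf i⟩ +
      phiD H D ⟨(f (i + 1 + 1), f (i + 1)), (hf (i + 1)).symm⟩ =
    betaD H D f hf i + betaD H D f hf (i + 1) + 1 := by
  rw [phiD_eval H D (f i) (f (i + 1)) (hf i) ⟨f (i + 1), hf i⟩ ⟨f i, (hf i).symm⟩,
      phiD_eval H D (f (i + 1 + 1)) (f (i + 1)) ((hf (i + 1)).symm)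
        ⟨f (i + 1), (hf (i + 1)).symm⟩ ⟨f i, (hf i).symm⟩]
  have i1 : (homZ2 H).inv (EvH H (f i) (f (i + 1)) (hf i))
      = EvH H (f (i + 1)) (f i) (hf i).symm := rfl
  have i2 : (homZ2 H).inv (BfnH H (f (i + 1)) ⟨f i, (hf i).symm⟩)
      = AfnH H (f (i + 1)) ⟨f i, (hf i).symm⟩ := rfl
  have d1 := D.defect (EvH H (f i) (f (i + 1)) (hf i)) (BfnH H (f (i + 1)) ⟨f i, (hf i).symm⟩)
  rw [i1, i2] at d1
  rw [z2_move _ _ _ _ d1]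
  have i3 : (homZ2 H).inv (EvH H (f (i + 1 + 1)) (f (i + 1)) ((hf (i + 1)).symm))
      = EvH H (f (i + 1)) (f (i + 1 + 1)) (hf (i + 1)) := rfl
  have i4 : (homZ2 H).inv (BfnH H (f (i + 1)) ⟨f i, (hf i).symm⟩)
      = AfnH H (f (i + 1)) ⟨f (i + 1 + 1), hf (i + 1)⟩ := rfl
  have d2 := D.defect (EvH H (f (i + 1 + 1)) (f (i + 1)) ((hf (i + 1)).symm))
      (BfnH H (f (i + 1)) ⟨f i, (hf i).symm⟩)
  rw [i3, i4] at d2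
  rw [z2_move _ _ _ _ d2]
  have i5 : D.eta (EvH H (f (i + 1 + 1)) (f (i + 1)) ((hf (i + 1)).symm))
      = D.eta (EvH H (f (i + 1)) (f (i + 1 + 1)) (hf (i + 1))) + 1 := by
    rw [show EvH H (f (i + 1 + 1)) (f (i + 1)) ((hf (i + 1)).symm)
        = (homZ2 H).inv (EvH H (f (i + 1)) (f (i + 1 + 1)) (hf (i + 1))) from rfl]; exact D.etainv _
  rw [i5]
  simp only [betaD]
  generalize D.c (EvH H (f i) (f (i + 1)) (hf i)) (AfnH H (f i) ⟨f (i + 1), hf i⟩) = q1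
  generalize D.c (EvH H (f (i + 1)) (f i) (hf i).symm)
      (AfnH H (f (i + 1)) ⟨f i, (hf i).symm⟩) = q2
  generalize D.eta (EvH H (f i) (f (i + 1)) (hf i)) = q3
  generalize D.eta (BfnH H (f (i + 1)) ⟨f i, (hf i).symm⟩) = q4
  generalize D.c (EvH H (f (i + 1 + 1)) (f (i + 1)) ((hf (i + 1)).symm))
      (AfnH H (f (i + 1 + 1)) ⟨f (i + 1), (hf (i + 1)).symm⟩) = r1
  generalize D.c (EvH H (f (i + 1)) (f (i + 1 + 1)) (hf (i + 1)))
      (AfnH H (f (i + 1)) ⟨f (i + 1 + 1), hf (i + 1)⟩) = r2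
  generalize D.eta (EvH H (f (i + 1)) (f (i + 1 + 1)) (hf (i + 1))) = r3
  revert q1 q2 q3 q4 r1 r2 r3
  decide

end AuxHom

lemma sum_range_zmod {n : ℕ} [NeZero n] {M : Type} [AddCommMonoid M] (G : ZMod n → M) :
    ∑ k ∈ Finset.range n, G (k : ZMod n) = ∑ i : ZMod n, G i := by
  refine Finset.sum_bij' (fun k _ => ((k : ℕ) : ZMod n)) (fun i _ => i.val)
    (fun a _ => Finset.mem_univ _) (fun i _ => Finset.mem_range.mpr (ZMod.val_lt i))
    (fun a ha => ZMod.val_natCast_of_lt (Finset.mem_range.mp ha))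
    (fun i _ => ZMod.natCast_rightInverse i) (fun a _ => rfl)


/-- If `H` has an odd cycle with `σ₂ = 0`, then for every `m ≥ 0`
there is no `Z₂`-map from `S^m(𝓗(H))` to `Q₁`. -/
theorem no_z2map_of_trivial_sig2 {V : Type} [Fintype V] (H : SimpleGraph V)
    (hsig : ∃ n : ℕ, Odd n ∧ 3 ≤ n ∧
      ∃ (f : ZMod n → V) (hf : IsCycleHom H n f), sig2 H n f hf = 0)
    (m : ℕ) :
    ¬ ∃ f : (Z2Poset.sd^[m] (homZ2 H)).carrier → Q1,
        Monotone f ∧ ∀ x, f ((Z2Poset.sd^[m] (homZ2 H)).inv x) = q1inv (f x) := by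
  rintro ⟨g, hmono, hequi⟩
  obtain ⟨n, hodd, h3, f, hf, hs⟩ := hsig
  haveI : NeZero n := ⟨by omega⟩
  set D : Cocyc (homZ2 H) := bundleC m (homZ2 H) g hmono hequi with hD
  set Φ : ArcSpace H →ₗ[ZMod 2] ZMod 2 :=
    Finsupp.linearCombination (ZMod 2) (phiD H D) with hPhi
  set X : ArcSpace H := ∑ k ∈ Finset.range n,
    (Finsupp.single (⟨(f (2 * (k : ZMod n)), f (2 * (k : ZMod n) + 1)), hf _⟩ : Arc H) 1 +
     Finsupp.single
       (⟨(f (2 * (k : ZMod n) + 1 + 1), f (2 * (k : ZMod n) + 1)), (hf _).symm⟩ : Arc H) 1)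
    with hX
  -- `X` is in the span of the relators
  have hmk : ((Submodule.span (ZMod 2) (relators2 H)).mkQ X) = sig2 H n f hf := by
    rw [hX, map_sum, sig2]
    refine Finset.sum_congr rfl fun k _ => ?_
    rw [map_add]
    rfl
  have hmem : X ∈ Submodule.span (ZMod 2) (relators2 H) := by
    rw [← Submodule.Quotient.mk_eq_zero]
    show (Submodule.span (ZMod 2) (relators2 H)).mkQ X = 0
    rw [hmk, hs]
  -- `Φ` vanishes on relators
  have hrel : ∀ r ∈ relators2 H, Φ r = 0 := by
    rintro r ⟨a, b, c, d, hab, hcb, hcd, had, rfl⟩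
    rw [hPhi, map_add, map_add, map_add,
        Finsupp.linearCombination_single, Finsupp.linearCombination_single,
        Finsupp.linearCombination_single, Finsupp.linearCombination_single,
        one_smul, one_smul, one_smul, one_smul,
        phiD_eval H D a b hab ⟨b, hab⟩ ⟨a, hab.symm⟩,
        phiD_eval H D c b hcb ⟨b, hcb⟩ ⟨a, hab.symm⟩,
        phiD_eval H D c d hcd ⟨b, hcb⟩ ⟨a, had.symm⟩,
        phiD_eval H D a d had ⟨b, hab⟩ ⟨a, had.symm⟩]
    -- the thirteen elements
    have hm1v : ∀ x ∈ ({a} : Set V), ∀ y ∈ ({b, d} : Set V), H.Adj x y := by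
      intro x hx y hy
      rw [Set.mem_singleton_iff] at hx; subst hx
      rcases hy with rfl | hy
      · exact hab
      · rw [Set.mem_singleton_iff] at hy; subst hy; exact had
    have hm2v : ∀ x ∈ ({a, c} : Set V), ∀ y ∈ ({b} : Set V), H.Adj x y := by
      intro x hx y hy
      rw [Set.mem_singleton_iff] at hy; subst hy
      rcases hx with rfl | hx
      · exact hab
      · rw [Set.mem_singleton_iff] at hx; subst hx; exact hcb
    have hm3v : ∀ x ∈ ({c} : Set V), ∀ y ∈ ({b, d} : Set V), H.Adj x y := by
      intro x hx y hy
      rw [Set.mem_singleton_iff] at hx; subst hx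
      rcases hy with rfl | hy
      · exact hcb
      · rw [Set.mem_singleton_iff] at hy; subst hy; exact hcd
    have hm4v : ∀ x ∈ ({a, c} : Set V), ∀ y ∈ ({d} : Set V), H.Adj x y := by
      intro x hx y hy
      rw [Set.mem_singleton_iff] at hy; subst hy
      rcases hx with rfl | hx
      · exact had
      · rw [Set.mem_singleton_iff] at hx; subst hx; exact hcd
    have hzv : ∀ x ∈ ({a, c} : Set V), ∀ y ∈ ({b, d} : Set V), H.Adj x y := by
      intro x hx y hy
      rcases hx with rfl | hx
      · exact hm1v x rfl y hy
      · rw [Set.mem_singleton_iff] at hx; subst hx; exact hm3v x rfl y hy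
    set m1 : HomPt H := ⟨(({a} : Set V), ({b, d} : Set V)), ⟨a, rfl⟩, ⟨b, Or.inl rfl⟩, hm1v⟩
      with hm1
    set m2 : HomPt H := ⟨(({a, c} : Set V), ({b} : Set V)), ⟨a, Or.inl rfl⟩, ⟨b, rfl⟩, hm2v⟩
      with hm2
    set m3 : HomPt H := ⟨(({c} : Set V), ({b, d} : Set V)), ⟨c, rfl⟩, ⟨b, Or.inl rfl⟩, hm3v⟩
      with hm3
    set m4 : HomPt H := ⟨(({a, c} : Set V), ({d} : Set V)), ⟨a, Or.inl rfl⟩, ⟨d, rfl⟩, hm4v⟩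
      with hm4
    set z : HomPt H := ⟨(({a, c} : Set V), ({b, d} : Set V)), ⟨a, Or.inl rfl⟩,
      ⟨b, Or.inl rfl⟩, hzv⟩ with hz
    -- order relations
    have sing_sub : ∀ (x : V) (s : Set V), x ∈ s → ({x} : Set V) ⊆ s := by
      intro x s hx y hy; rw [Set.mem_singleton_iff] at hy; subst hy; exact hx
    have pair_sub : ∀ (x y : V) (s : Set V), x ∈ s → y ∈ s → ({x, y} : Set V) ⊆ s := by
      intro x y s hx hy u hu
      rcases hu with rfl | hu
      · exact hx
      · rw [Set.mem_singleton_iff] at hu; subst hu; exact hy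
    have lEab_m1 : EvH H a b hab ≤ m1 :=
      (homPt_le_iff H).mpr ⟨subset_rfl, sing_sub b _ (Or.inl rfl)⟩
    have lEad_m1 : EvH H a d had ≤ m1 :=
      (homPt_le_iff H).mpr ⟨subset_rfl, sing_sub d _ (Or.inr rfl)⟩
    have lm1_Aa : m1 ≤ AfnH H a ⟨b, hab⟩ :=
      (homPt_le_iff H).mpr ⟨subset_rfl, pair_sub b d _ hab had⟩
    have lEab_m2 : EvH H a b hab ≤ m2 :=
      (homPt_le_iff H).mpr ⟨sing_sub a _ (Or.inl rfl), subset_rfl⟩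
    have lEcb_m2 : EvH H c b hcb ≤ m2 :=
      (homPt_le_iff H).mpr ⟨sing_sub c _ (Or.inr rfl), subset_rfl⟩
    have lm2_Bb : m2 ≤ BfnH H b ⟨a, hab.symm⟩ :=
      (homPt_le_iff H).mpr ⟨pair_sub a c _ hab.symm hcb.symm, subset_rfl⟩
    have lEcb_m3 : EvH H c b hcb ≤ m3 :=
      (homPt_le_iff H).mpr ⟨subset_rfl, sing_sub b _ (Or.inl rfl)⟩
    have lEcd_m3 : EvH H c d hcd ≤ m3 :=
      (homPt_le_iff H).mpr ⟨subset_rfl, sing_sub d _ (Or.inr rfl)⟩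
    have lm3_Ac : m3 ≤ AfnH H c ⟨b, hcb⟩ :=
      (homPt_le_iff H).mpr ⟨subset_rfl, pair_sub b d _ hcb hcd⟩
    have lEcd_m4 : EvH H c d hcd ≤ m4 :=
      (homPt_le_iff H).mpr ⟨sing_sub c _ (Or.inr rfl), subset_rfl⟩
    have lEad_m4 : EvH H a d had ≤ m4 :=
      (homPt_le_iff H).mpr ⟨sing_sub a _ (Or.inl rfl), subset_rfl⟩
    have lm4_Bd : m4 ≤ BfnH H d ⟨a, had.symm⟩ :=
      (homPt_le_iff H).mpr ⟨pair_sub a c _ had.symm hcd.symm, subset_rfl⟩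
    have lm1_z : m1 ≤ z := (homPt_le_iff H).mpr ⟨sing_sub a _ (Or.inl rfl), subset_rfl⟩
    have lm2_z : m2 ≤ z := (homPt_le_iff H).mpr ⟨subset_rfl, sing_sub b _ (Or.inl rfl)⟩
    have lm3_z : m3 ≤ z := (homPt_le_iff H).mpr ⟨sing_sub c _ (Or.inr rfl), subset_rfl⟩
    have lm4_z : m4 ≤ z := (homPt_le_iff H).mpr ⟨subset_rfl, sing_sub d _ (Or.inr rfl)⟩
    rw [D.cocy (EvH H a b hab) m1 (AfnH H a ⟨b, hab⟩) lEab_m1 lm1_Aa,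
        D.cocy (EvH H a b hab) m2 (BfnH H b ⟨a, hab.symm⟩) lEab_m2 lm2_Bb,
        D.cocy (EvH H c b hcb) m3 (AfnH H c ⟨b, hcb⟩) lEcb_m3 lm3_Ac,
        D.cocy (EvH H c b hcb) m2 (BfnH H b ⟨a, hab.symm⟩) lEcb_m2 lm2_Bb,
        D.cocy (EvH H c d hcd) m3 (AfnH H c ⟨b, hcb⟩) lEcd_m3 lm3_Ac,
        D.cocy (EvH H c d hcd) m4 (BfnH H d ⟨a, had.symm⟩) lEcd_m4 lm4_Bd,
        D.cocy (EvH H a d had) m1 (AfnH H a ⟨b, hab⟩) lEad_m1 lm1_Aa,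
        D.cocy (EvH H a d had) m4 (BfnH H d ⟨a, had.symm⟩) lEad_m4 lm4_Bd,
        z2_rearr _ _ _ (D.cocy (EvH H a b hab) m1 z lEab_m1 lm1_z),
        z2_rearr _ _ _ (D.cocy (EvH H a b hab) m2 z lEab_m2 lm2_z),
        z2_rearr _ _ _ (D.cocy (EvH H c b hcb) m3 z lEcb_m3 lm3_z),
        z2_rearr _ _ _ (D.cocy (EvH H c b hcb) m2 z lEcb_m2 lm2_z),
        z2_rearr _ _ _ (D.cocy (EvH H c d hcd) m3 z lEcd_m3 lm3_z),
        z2_rearr _ _ _ (D.cocy (EvH H c d hcd) m4 z lEcd_m4 lm4_z),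
        z2_rearr _ _ _ (D.cocy (EvH H a d had) m1 z lEad_m1 lm1_z),
        z2_rearr _ _ _ (D.cocy (EvH H a d had) m4 z lEad_m4 lm4_z)]
    generalize D.c (EvH H a b hab) z = e1
    generalize D.c (EvH H c b hcb) z = e2
    generalize D.c (EvH H c d hcd) z = e3
    generalize D.c (EvH H a d had) z = e4
    generalize D.c m1 z = w1
    generalize D.c m2 z = w2
    generalize D.c m3 z = w3
    generalize D.c m4 z = w4
    generalize D.c m1 (AfnH H a ⟨b, hab⟩) = p1
    generalize D.c m2 (BfnH H b ⟨a, hab.symm⟩) = p2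
    generalize D.c m3 (AfnH H c ⟨b, hcb⟩) = p3
    generalize D.c m4 (BfnH H d ⟨a, had.symm⟩) = p4
    revert e1 e2 e3 e4 w1 w2 w3 w4 p1 p2 p3 p4
    decide
  -- hence `Φ X = 0`
  have hzero : ∀ Y ∈ Submodule.span (ZMod 2) (relators2 H), Φ Y = 0 := by
    intro Y hY
    induction hY using Submodule.span_induction with
    | mem r hr => exact hrel r hr
    | zero => exact map_zero Φ
    | add x y hx hy ihx ihy => rw [map_add, ihx, ihy, add_zero]
    | smul a x hx ih => rw [map_smul, ih, smul_zero]
  -- on the other hand `Φ X = 1`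
  obtain ⟨tinv, htinv⟩ : ∃ t : ZMod n, 2 * t = 1 := by
    obtain ⟨j, hj⟩ := hodd
    refine ⟨((j + 1 : ℕ) : ZMod n), ?_⟩
    have h1 : ((2 * (j + 1) : ℕ) : ZMod n) = ((n : ℕ) : ZMod n) + 1 := by
      rw [show 2 * (j + 1) = n + 1 by omega]
      push_cast
      ring
    rw [ZMod.natCast_self, zero_add] at h1
    calc (2 : ZMod n) * ((j + 1 : ℕ) : ZMod n) = ((2 * (j + 1) : ℕ) : ZMod n) := by
          push_cast; ring
      _ = 1 := h1
  have bij1 : Function.Bijective (fun i : ZMod n => 2 * i) := by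
    apply Function.bijective_iff_has_inverse.mpr
    refine ⟨fun j => tinv * j, fun i => ?_, fun j => ?_⟩
    · show tinv * (2 * i) = i
      rw [← mul_assoc, mul_comm tinv 2, htinv, one_mul]
    · show 2 * (tinv * j) = j
      rw [← mul_assoc, htinv, one_mul]
  have bij2 : Function.Bijective (fun i : ZMod n => 2 * i + 1) := by
    apply Function.bijective_iff_has_inverse.mpr
    refine ⟨fun j => tinv * (j - 1), fun i => ?_, fun j => ?_⟩
    · show tinv * (2 * i + 1 - 1) = i
      rw [add_sub_cancel_right, ← mul_assoc, mul_comm tinv 2, htinv, one_mul]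
    · show 2 * (tinv * (j - 1)) + 1 = j
      rw [← mul_assoc, htinv, one_mul, sub_add_cancel]
  have hsum1 : ∑ k ∈ Finset.range n, betaD H D f hf (2 * (k : ZMod n))
      = ∑ i : ZMod n, betaD H D f hf i := by
    rw [sum_range_zmod (fun j : ZMod n => betaD H D f hf (2 * j))]
    exact Fintype.sum_bijective _ bij1 _ _ (fun i => rfl)
  have hsum2 : ∑ k ∈ Finset.range n, betaD H D f hf (2 * (k : ZMod n) + 1)
      = ∑ i : ZMod n, betaD H D f hf i := by
    rw [sum_range_zmod (fun j : ZMod n => betaD H D f hf (2 * j + 1))]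
    exact Fintype.sum_bijective _ bij2 _ _ (fun i => rfl)
  have hn2 : ((n : ℕ) : ZMod 2) = 1 := by
    obtain ⟨j, hj⟩ := hodd
    subst hj
    push_cast
    rw [show ((2 : ZMod 2)) = 0 by decide]
    ring
  have hone : Φ X = 1 := by
    rw [hX, map_sum]
    calc ∑ k ∈ Finset.range n, Φ
            (Finsupp.single (⟨(f (2 * (k : ZMod n)), f (2 * (k : ZMod n) + 1)), hf _⟩ : Arc H) 1 +
             Finsupp.single (⟨(f (2 * (k : ZMod n) + 1 + 1), f (2 * (k : ZMod n) + 1)),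
               (hf _).symm⟩ : Arc H) 1)
        = ∑ k ∈ Finset.range n,
            (betaD H D f hf (2 * (k : ZMod n)) + betaD H D f hf (2 * (k : ZMod n) + 1) + 1) := by
          refine Finset.sum_congr rfl fun k _ => ?_
          rw [hPhi, map_add, Finsupp.linearCombination_single, Finsupp.linearCombination_single,
            one_smul, one_smul]
          exact phiD_pair H D f hf (2 * (k : ZMod n))
      _ = (∑ k ∈ Finset.range n, betaD H D f hf (2 * (k : ZMod n)))
            + (∑ k ∈ Finset.range n, betaD H D f hf (2 * (k : ZMod n) + 1))
            + (∑ _k ∈ Finset.range n, (1 : ZMod 2)) := by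
          rw [← Finset.sum_add_distrib, ← Finset.sum_add_distrib]
      _ = 1 := by
          rw [hsum1, hsum2, Finset.sum_const, Finset.card_range, nsmul_eq_mul, mul_one,
            CharTwo.add_self_eq_zero, zero_add, hn2]
  rw [hzero X hmem] at hone
  exact zero_ne_one hone
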